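/- Let L, R, k be positive integers, χ > 0, Φ ∈ ℂ^{L×k} and Ψ ∈ ℂ^{R×k}. Assume the uniform overlap condition for Φ: the smallest singular value of Φ satisfies s_min(Φ) ≥ ‖Φ‖_F / ((1+χ)·√k). Then ‖Φ·Ψᴴ‖_F ≥ (1/(1+χ)) · min_{m∈[k]} ‖Φ_{:,m}‖ · ‖Ψ_{:,m}‖. -/

import Mathlib

open Matrix

/-- Frobenius norm of a complex matrix. -/
noncomputable def frob {m n : Type*} [Fintype m] [Fintype n] (A : Matrix m n ℂ) : ℝ :=
  Real.sqrt (∑ i, ∑ j, ‖A i j‖ ^ 2)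

/-- Euclidean norm of the `m`-th column of a matrix. -/
noncomputable def colNorm {l m : Type*} [Fintype l] (A : Matrix l m ℂ) (j : m) : ℝ :=
  Real.sqrt (∑ i, ‖A i j‖ ^ 2)

/-- Smallest singular value of a matrix `A`, i.e. the square root of the smallest
eigenvalue of the Hermitian PSD matrix `AᴴA`. -/
noncomputable def smin {l : Type*} [Fintype l] {n : ℕ} (hn : 0 < n)
    (A : Matrix l (Fin n) ℂ) : ℝ :=
  Real.sqrt (Finset.univ.inf' (Finset.univ_nonempty_iff.mpr ⟨⟨0, hn⟩⟩)
    (Matrix.isHermitian_conjTranspose_mul_self A).eigenvalues)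

lemma dot_star_self_re {n : Type*} [Fintype n] (v : n → ℂ) :
    (star v ⬝ᵥ v).re = ∑ i, ‖v i‖ ^ 2 := by
  rw [dotProduct, Complex.re_sum]
  refine Finset.sum_congr rfl fun i _ => ?_
  simp [RCLike.conj_mul, ← Complex.ofReal_pow]

lemma quad_ge {n : Type*} [Fintype n] [DecidableEq n] {A : Matrix n n ℂ} (hA : A.IsHermitian)
    (lam : ℝ) (hlam : ∀ i, lam ≤ hA.eigenvalues i) (x : n → ℂ) :
    lam * ∑ i, ‖x i‖ ^ 2 ≤ (star x ⬝ᵥ A *ᵥ x).re := by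
  set U : Matrix n n ℂ := (hA.eigenvectorUnitary : Matrix n n ℂ) with hU
  set y : n → ℂ := (star U) *ᵥ x with hydef
  have hy : star x ᵥ* U = star y := by
    rw [hydef, star_mulVec, star_eq_conjTranspose, conjTranspose_conjTranspose]
  have h1 : star x ⬝ᵥ A *ᵥ x
      = star y ⬝ᵥ (diagonal (Complex.ofReal ∘ hA.eigenvalues)) *ᵥ y := by
    conv_lhs => rw [hA.spectral_theorem, Unitary.conjStarAlgAut_apply]
    rw [← mulVec_mulVec, ← mulVec_mulVec, dotProduct_mulVec, hy]
    rfl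
  have hnorm : ∑ i, ‖y i‖ ^ 2 = ∑ i, ‖x i‖ ^ 2 := by
    have h2 : star y ⬝ᵥ y = star x ⬝ᵥ x := by
      calc star y ⬝ᵥ y = (star x ᵥ* U) ⬝ᵥ (star U *ᵥ x) := by rw [hy]
        _ = star x ⬝ᵥ (U * star U) *ᵥ x := by rw [← dotProduct_mulVec, mulVec_mulVec]
        _ = star x ⬝ᵥ x := by
            rw [(Matrix.mem_unitaryGroup_iff).mp hA.eigenvectorUnitary.2, one_mulVec]
    rw [← dot_star_self_re, ← dot_star_self_re, h2]
  have h3 : (star y ⬝ᵥ (diagonal (Complex.ofReal ∘ hA.eigenvalues)) *ᵥ y).re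
      = ∑ i, hA.eigenvalues i * ‖y i‖ ^ 2 := by
    rw [dotProduct, Complex.re_sum]
    refine Finset.sum_congr rfl fun i _ => ?_
    have : (diagonal (Complex.ofReal ∘ hA.eigenvalues) *ᵥ y) i
        = (hA.eigenvalues i : ℂ) * y i := by
      simp [mulVec_diagonal]
    rw [this]
    have : (star y) i * ((hA.eigenvalues i : ℂ) * y i)
        = (hA.eigenvalues i : ℂ) * ((starRingEnd ℂ) (y i) * y i) := by
      simp [Pi.star_apply, Complex.star_def]; ring
    rw [this, RCLike.conj_mul]
    simp [← Complex.ofReal_pow, ← Complex.ofReal_mul]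
  rw [h1, h3, ← hnorm, Finset.mul_sum]
  refine Finset.sum_le_sum fun i _ => ?_
  have := sq_nonneg ‖y i‖
  nlinarith [hlam i]

lemma phi_colbound {L k : ℕ} (hk : 0 < k) (Φ : Matrix (Fin L) (Fin k) ℂ) (x : Fin k → ℂ) :
    (smin hk Φ) ^ 2 * ∑ i, ‖x i‖ ^ 2 ≤ ∑ i, ‖(Φ *ᵥ x) i‖ ^ 2 := by
  set lam := Finset.univ.inf' (Finset.univ_nonempty_iff.mpr ⟨⟨0, hk⟩⟩)
    (Matrix.isHermitian_conjTranspose_mul_self Φ).eigenvalues with hlamdef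
  have hlam0 : 0 ≤ lam := by
    rw [hlamdef]
    exact Finset.le_inf' _ _ fun i _ => Matrix.eigenvalues_conjTranspose_mul_self_nonneg Φ i
  have hsq : (smin hk Φ) ^ 2 = lam := Real.sq_sqrt hlam0
  rw [hsq]
  have key := quad_ge (Matrix.isHermitian_conjTranspose_mul_self Φ) lam
    (fun i => Finset.inf'_le _ (Finset.mem_univ i)) x
  have h1 : star x ⬝ᵥ (Φᴴ * Φ) *ᵥ x = star (Φ *ᵥ x) ⬝ᵥ (Φ *ᵥ x) := by
    rw [← mulVec_mulVec, dotProduct_mulVec, ← star_mulVec]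
  rw [h1, dot_star_self_re] at key
  exact key

/-- under the uniform overlap condition for `Φ`,
`‖Φ·Ψᴴ‖_F ≥ (1/(1+χ)) · min_m ‖Φ_{:,m}‖·‖Ψ_{:,m}‖`. -/
theorem stmt4 (L R k : ℕ) (hL : 0 < L) (hR : 0 < R) (hk : 0 < k) (χ : ℝ) (hχ : 0 < χ)
    (Φ : Matrix (Fin L) (Fin k) ℂ) (Ψ : Matrix (Fin R) (Fin k) ℂ)
    (hover : frob Φ / ((1 + χ) * Real.sqrt k) ≤ smin hk Φ) :
    (1 / (1 + χ)) *
        Finset.univ.inf' (Finset.univ_nonempty_iff.mpr ⟨⟨0, hk⟩⟩)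
          (fun m => colNorm Φ m * colNorm Ψ m) ≤
      frob (Φ * Ψᴴ) := by
  have hχ1 : (0:ℝ) < 1 + χ := by linarith
  have hk0 : (0:ℝ) < (k:ℝ) := by exact_mod_cast hk
  have hsk : (0:ℝ) < Real.sqrt k := Real.sqrt_pos.mpr hk0
  set σ := smin hk Φ with hσdef
  have hσ0 : 0 ≤ σ := Real.sqrt_nonneg _
  have hfΨ0 : 0 ≤ frob Ψ := Real.sqrt_nonneg _
  have hfΦ0 : 0 ≤ frob Φ := Real.sqrt_nonneg _
  -- step 1 : frob (Φ * Ψᴴ) ≥ σ * frob Ψ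
  have step1 : σ * frob Ψ ≤ frob (Φ * Ψᴴ) := by
    have hsum : σ ^ 2 * (∑ j, ∑ m, ‖Ψ j m‖ ^ 2) ≤ ∑ i, ∑ j, ‖(Φ * Ψᴴ) i j‖ ^ 2 := by
      rw [Finset.sum_comm (γ := Fin L)]
      have : ∀ j : Fin R, σ ^ 2 * ∑ m, ‖Ψ j m‖ ^ 2 ≤ ∑ i, ‖(Φ * Ψᴴ) i j‖ ^ 2 := by
        intro j
        have := phi_colbound hk Φ (fun m => (starRingEnd ℂ) (Ψ j m))
        simpa [Matrix.mul_apply, Matrix.mulVec, dotProduct, Matrix.conjTranspose_apply]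
          using this
      calc σ ^ 2 * (∑ j, ∑ m, ‖Ψ j m‖ ^ 2) = ∑ j, σ ^ 2 * ∑ m, ‖Ψ j m‖ ^ 2 := by
            rw [Finset.mul_sum]
        _ ≤ ∑ j, ∑ i, ‖(Φ * Ψᴴ) i j‖ ^ 2 := Finset.sum_le_sum fun j _ => this j
    have : σ * frob Ψ = Real.sqrt (σ ^ 2 * (∑ j, ∑ m, ‖Ψ j m‖ ^ 2)) := by
      rw [Real.sqrt_mul (sq_nonneg σ), Real.sqrt_sq hσ0, frob]
    rw [this, frob]
    exact Real.sqrt_le_sqrt hsum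
  -- step 2 : σ * frob Ψ ≥ frob Φ * frob Ψ / ((1+χ) * √k)
  have step2 : frob Φ * frob Ψ / ((1 + χ) * Real.sqrt k) ≤ σ * frob Ψ := by
    have h := mul_le_mul_of_nonneg_right hover hfΨ0
    calc frob Φ * frob Ψ / ((1 + χ) * Real.sqrt k)
        = frob Φ / ((1 + χ) * Real.sqrt k) * frob Ψ := by ring
      _ ≤ σ * frob Ψ := h
  -- step 3 : inf' ≤ frob Φ * frob Ψ / √k
  set I := Finset.univ.inf' (Finset.univ_nonempty_iff.mpr ⟨⟨0, hk⟩⟩)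
    (fun m => colNorm Φ m * colNorm Ψ m) with hIdef
  have step3 : I ≤ frob Φ * frob Ψ / Real.sqrt k := by
    have hCS : ∑ m, colNorm Φ m * colNorm Ψ m ≤ frob Φ * frob Ψ := by
      have := Real.sum_sqrt_mul_sqrt_le (f := fun m => ∑ i, ‖Φ i m‖ ^ 2)
        (g := fun m => ∑ i, ‖Ψ i m‖ ^ 2) Finset.univ
        (fun m => Finset.sum_nonneg fun i _ => sq_nonneg _)
        (fun m => Finset.sum_nonneg fun i _ => sq_nonneg _)
      calc ∑ m, colNorm Φ m * colNorm Ψ m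
          ≤ Real.sqrt (∑ m, ∑ i, ‖Φ i m‖ ^ 2) * Real.sqrt (∑ m, ∑ i, ‖Ψ i m‖ ^ 2) := this
        _ = frob Φ * frob Ψ := by rw [frob, frob, Finset.sum_comm, Finset.sum_comm (γ := Fin R)]
    have hkI : (k:ℝ) * I ≤ ∑ m, colNorm Φ m * colNorm Ψ m := by
      have := Finset.card_nsmul_le_sum Finset.univ (fun m => colNorm Φ m * colNorm Ψ m) I
        (fun m _ => Finset.inf'_le _ (Finset.mem_univ m))
      simpa [nsmul_eq_mul] using this
    have hI0 : 0 ≤ I := by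
      rw [hIdef]
      refine Finset.le_inf' _ _ fun m _ => mul_nonneg (Real.sqrt_nonneg _) (Real.sqrt_nonneg _)
    have h1k : (1:ℝ) ≤ (k:ℝ) := by exact_mod_cast hk
    have hskk : Real.sqrt k ≤ (k:ℝ) := by
      nlinarith [Real.sq_sqrt hk0.le, Real.sqrt_nonneg (k:ℝ), h1k,
        sq_nonneg (Real.sqrt (k:ℝ) - 1)]
    rw [le_div_iff₀ hsk]
    calc I * Real.sqrt k ≤ I * k := by
          exact mul_le_mul_of_nonneg_left hskk hI0
      _ = (k:ℝ) * I := by ring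
      _ ≤ frob Φ * frob Ψ := le_trans hkI hCS
  -- combine
  have hfinal : (1 / (1 + χ)) * I ≤ frob Φ * frob Ψ / ((1 + χ) * Real.sqrt k) := by
    have heq : frob Φ * frob Ψ / ((1 + χ) * Real.sqrt k)
        = (frob Φ * frob Ψ / Real.sqrt k) / (1 + χ) := by
      rw [div_div, mul_comm (Real.sqrt (k:ℝ)) (1+χ)]
    rw [one_div, inv_mul_eq_div, heq]
    gcongr
  exact le_trans hfinal (le_trans step2 step1)
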